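/- Let (λ₁, v) be a real eigenpair of the n×n real matrix A = [a_{ij}] (n ≥ 2), where every component of v is nonzero. Let S = diag(v) and B = S^{-1} A S. If λ is a complex eigenvalue of A with λ ≠ λ₁, then |λ| ≤ max_{1≤i≤n} (|a_{ii}| + r̂_i), where r̂_i is the radius of the i-th Gershgorin disc of the second type of B^T (computed from the i-th column of B, whose diagonal entry equals a_{ii}). -/

import Mathlib

open Matrix
open scoped ENNReal

/-- Non-increasing (descending) sort of a list of reals. -/
noncomputable def sortDesc (l : List ℝ) : List ℝ := (l.insertionSort (· ≤ ·)).reverse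

/-- Given the descending rearrangement `l` of `n` numbers, the sum of the largest
(about) half minus the sum of the smallest (about) half, skipping the middle
element when `n` is odd. -/
noncomputable def halfSumDiff (n : ℕ) (l : List ℝ) : ℝ :=
  if n % 2 = 1 then (l.take ((n - 1) / 2)).sum - (l.drop ((n + 1) / 2)).sum
  else (l.take (n / 2)).sum - (l.drop (n / 2)).sum

/-- Radius of the `i`-th Gershgorin disc of the second type of `M`, computed from
the `i`-th row of `M` with the diagonal entry replaced by `0`. -/
noncomputable def secondTypeRadius {n : ℕ} (M : Matrix (Fin n) (Fin n) ℝ) (i : Fin n) : ℝ :=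
  halfSumDiff n (sortDesc (List.ofFn fun j : Fin n => if j = i then 0 else M i j))

/-- The `i`-th Gershgorin disc of the second type of `M`. -/
noncomputable def secondTypeDisc {n : ℕ} (M : Matrix (Fin n) (Fin n) ℝ) (i : Fin n) : Set ℂ :=
  Metric.closedBall ((M i i : ℝ) : ℂ) (secondTypeRadius M i)

/-- The Gershgorin region of the second type of `M`. -/
noncomputable def secondTypeRegion {n : ℕ} (M : Matrix (Fin n) (Fin n) ℝ) : Set ℂ :=
  ⋃ i : Fin n, secondTypeDisc M i

/-- `μ` is a (complex) eigenvalue of the real matrix `A`, i.e. a complex root of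
its characteristic polynomial. -/
def IsEigenvalueC {n : ℕ} (A : Matrix (Fin n) (Fin n) ℝ) (μ : ℂ) : Prop :=
  ((A.map ((↑) : ℝ → ℂ)).charpoly).IsRoot μ

/-- The `k`-th largest element (1-indexed) among the `n - 1` off-diagonal entries of
column `j` of `B`. -/
noncomputable def kthLargestOffDiag {n : ℕ} (B : Matrix (Fin n) (Fin n) ℝ) (j : Fin n)
    (k : ℕ) : ℝ :=
  (sortDesc (((List.ofFn fun i : Fin n => B i j).eraseIdx j.val))).getD (k - 1) 0

/-- The ℓ_p norm of a vector in ℝ^n. -/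
noncomputable def lpNorm {n : ℕ} (p : ℝ≥0∞) (x : Fin n → ℝ) : ℝ :=
  @norm (PiLp p fun _ : Fin n => ℝ) _ ((WithLp.equiv p (∀ _ : Fin n, ℝ)).symm x)

/-- The seminorm-like quantity `τ_p(B)`: the supremum of `‖Bᵀ x‖_p` over all real
vectors `x` with `xᵀ e = 0` and `‖x‖_p = 1`. -/
noncomputable def tau {n : ℕ} (p : ℝ≥0∞) (B : Matrix (Fin n) (Fin n) ℝ) : ℝ :=
  sSup { t : ℝ | ∃ x : Fin n → ℝ, (∑ i, x i) = 0 ∧ lpNorm p x = 1 ∧ t = lpNorm p (Bᵀ *ᵥ x) }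

/-- The Ostrowski–Brauer set `Γ(M)` of a real square matrix `M`. -/
noncomputable def brauerSet {n : ℕ} (M : Matrix (Fin n) (Fin n) ℝ) : Set ℂ :=
  ⋃ (i : Fin n) (j : Fin n) (_ : i < j),
    { y : ℂ | ‖y - (M i i : ℝ)‖ * ‖y - (M j j : ℝ)‖ ≤
        (∑ k ∈ Finset.univ.filter fun k => k ≠ i, |M i k|) *
        (∑ k ∈ Finset.univ.filter fun k => k ≠ j, |M j k|) }

/-- `cs_j(A)` from Definition 2.3: sorted column sums difference. -/
noncomputable def csCol {n : ℕ} (A : Matrix (Fin n) (Fin n) ℝ) (j : Fin n) : ℝ :=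
  halfSumDiff n (sortDesc (List.ofFn fun i : Fin n => A i j))

/-- Theorem 7, bound (4): if `A v = λ₁ v` with all components of `v`
nonzero and `B = S⁻¹ A S` with `S = diag v`, then every eigenvalue `λ ≠ λ₁` of `A`
satisfies `|λ| ≤ max_i (|a_ii| + r̂_i)`, where `r̂_i` is the radius of the `i`-th
Gershgorin disc of the second type of `Bᵀ`. -/
lemma sum_map_abs_ge (l : List ℝ) (c : ℝ) (h : ∀ y ∈ l, c ≤ y) :
    (l.map fun y => |y - c|).sum = l.sum - l.length * c := by
  induction l with
  | nil => simp
  | cons a t ih =>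
    have ha : c ≤ a := h a (List.mem_cons_self)
    rw [List.map_cons, List.sum_cons, List.sum_cons, ih (fun y hy => h y (List.mem_cons_of_mem a hy)),
      abs_of_nonneg (by linarith)]
    push_cast [List.length_cons]
    ring

lemma sum_map_abs_le (l : List ℝ) (c : ℝ) (h : ∀ y ∈ l, y ≤ c) :
    (l.map fun y => |y - c|).sum = l.length * c - l.sum := by
  induction l with
  | nil => simp
  | cons a t ih =>
    have ha : a ≤ c := h a (List.mem_cons_self)
    rw [List.map_cons, List.sum_cons, List.sum_cons, ih (fun y hy => h y (List.mem_cons_of_mem a hy)),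
      abs_of_nonpos (by linarith)]
    push_cast [List.length_cons]
    ring

lemma sortDesc_perm (l : List ℝ) : (sortDesc l).Perm l :=
  (List.reverse_perm _).trans (List.perm_insertionSort _ l)

lemma sortDesc_sorted (l : List ℝ) : (sortDesc l).Pairwise (· ≥ ·) := by
  rw [sortDesc, List.pairwise_reverse]
  exact List.pairwise_insertionSort (· ≤ ·) l

lemma median_bound (n : ℕ) (hn : 1 ≤ n) (l : List ℝ) (hlen : l.length = n) :
    ∃ c : ℝ, (l.map fun y => |y - c|).sum ≤ halfSumDiff n (sortDesc l) := by
  set s := sortDesc l with hsdef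
  have hperm : s.Perm l := sortDesc_perm l
  have hs : s.length = n := by rw [hperm.length_eq, hlen]
  have hsort : s.Pairwise (· ≥ ·) := sortDesc_sorted l
  set m := n / 2 with hm
  have hmn : m < n := Nat.div_lt_self (by omega) (by omega)
  have hdne : s.drop m ≠ [] := by
    intro h
    have := congrArg List.length h
    simp [hs] at this; omega
  obtain ⟨c, t, hct⟩ := List.exists_cons_of_ne_nil hdne
  have hp : List.Pairwise (· ≥ ·) (s.take m ++ s.drop m) := by
    rw [List.take_append_drop]; exact hsort
  obtain ⟨-, hpd, hcross⟩ := List.pairwise_append.mp hp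
  have htake : ∀ y ∈ s.take m, c ≤ y := fun y hy =>
    hcross y hy c (by rw [hct]; exact List.mem_cons_self)
  have ht : ∀ y ∈ t, y ≤ c := by
    rw [hct] at hpd
    exact fun y hy => (List.pairwise_cons.mp hpd).1 y hy
  have hdrop : ∀ y ∈ s.drop m, y ≤ c := by
    rw [hct]
    intro y hy
    rcases List.mem_cons.mp hy with h | h
    · exact h ▸ le_refl c
    · exact ht y h
  have hlt : (s.take m).length = m := by
    rw [List.length_take, hs]; omega
  have hld : (s.drop m).length = n - m := by rw [List.length_drop, hs]
  have hsplit : (s.map fun y => |y - c|).sum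
      = ((s.take m).map fun y => |y - c|).sum + ((s.drop m).map fun y => |y - c|).sum := by
    rw [← List.sum_append, ← List.map_append, List.take_append_drop]
  have hpermsum : (l.map fun y => |y - c|).sum = (s.map fun y => |y - c|).sum :=
    ((hperm.map _).sum_eq).symm
  refine ⟨c, ?_⟩
  rw [hpermsum, hsplit, sum_map_abs_ge _ c htake, sum_map_abs_le _ c hdrop, hlt, hld]
  unfold halfSumDiff
  rcases Nat.even_or_odd n with he | ho
  · have h2 : n % 2 = 0 := Nat.even_iff.mp he
    rw [if_neg (by omega)]
    have : n - m = m := by omega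
    rw [this]
    push_cast
    ring_nf
    rfl
  · have h2 : n % 2 = 1 := Nat.odd_iff.mp ho
    rw [if_pos h2]
    have h1 : (n - 1) / 2 = m := by omega
    have h3 : (n + 1) / 2 = m + 1 := by omega
    have htl : t = s.drop (m + 1) := by
      rw [← List.tail_drop, hct]; rfl
    have hdsum : (s.drop m).sum = c + (s.drop (m+1)).sum := by
      rw [hct, List.sum_cons, htl]
    have hdl : (s.drop (m+1)).length = n - m - 1 := by
      rw [List.length_drop, hs]; omega
    rw [h1, h3, hdsum]
    have hnm : n - m = m + 1 := by omega
    rw [hnm]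
    push_cast
    ring_nf
    rfl


variable {n : ℕ}

lemma charmatrix_transpose (M : Matrix (Fin n) (Fin n) ℂ) :
    charmatrix Mᵀ = (charmatrix M)ᵀ := by
  ext i j
  by_cases h : i = j
  · subst h; simp [charmatrix_apply]
  · simp [charmatrix_apply, Matrix.diagonal_apply, h, Ne.symm h]

lemma charpoly_transpose' (M : Matrix (Fin n) (Fin n) ℂ) : Mᵀ.charpoly = M.charpoly := by
  rw [Matrix.charpoly, Matrix.charpoly, charmatrix_transpose, Matrix.det_transpose]

lemma exists_eigvec (M : Matrix (Fin n) (Fin n) ℂ) (μ : ℂ) (h : M.charpoly.IsRoot μ) :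
    ∃ x : Fin n → ℂ, x ≠ 0 ∧ M *ᵥ x = μ • x := by
  have hdet : (μ • (1 : Matrix (Fin n) (Fin n) ℂ) - M).det = 0 := by
    have h0 : Polynomial.eval μ (charmatrix M).det = 0 := h
    have h2 : Polynomial.eval μ (charmatrix M).det
        = ((charmatrix M).map (Polynomial.eval μ)).det := by
      rw [← Polynomial.coe_evalRingHom, RingHom.map_det]
      rfl
    have h3 : (charmatrix M).map (Polynomial.eval μ) = μ • 1 - M := by
      ext i j
      by_cases hij : i = j
      · subst hij
        simp [charmatrix_apply, Matrix.diagonal_apply, Matrix.one_apply]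
      · simp [charmatrix_apply, Matrix.diagonal_apply, hij, Matrix.one_apply]
    rw [h2, h3] at h0
    exact h0
  obtain ⟨x, hx0, hx⟩ := Matrix.exists_mulVec_eq_zero_iff.mpr hdet
  refine ⟨x, hx0, ?_⟩
  rw [Matrix.sub_mulVec, sub_eq_zero, Matrix.smul_mulVec, Matrix.one_mulVec] at hx
  exact hx.symm

theorem stmt10 {n : ℕ} (hn : 2 ≤ n) (A : Matrix (Fin n) (Fin n) ℝ)
    (lam1 : ℝ) (v : Fin n → ℝ) (hv : ∀ i, v i ≠ 0) (hAv : A *ᵥ v = lam1 • v)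
    (S B : Matrix (Fin n) (Fin n) ℝ) (hS : S = Matrix.diagonal v) (hB : B = S⁻¹ * A * S)
    (mu : ℂ) (hmu : IsEigenvalueC A mu) (hne : mu ≠ (lam1 : ℂ)) :
    ‖mu‖ ≤
      Finset.univ.sup' ⟨(⟨0, by omega⟩ : Fin n), Finset.mem_univ _⟩
        (fun i => |A i i| + secondTypeRadius Bᵀ i) := by
  classical
  -- entries of B
  have hSinv : S⁻¹ = Matrix.diagonal (fun i => (v i)⁻¹) := by
    rw [hS]
    apply Matrix.inv_eq_right_inv
    rw [Matrix.diagonal_mul_diagonal]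
    convert Matrix.diagonal_one using 2
    ext i
    exact mul_inv_cancel₀ (hv i)
  have hBent : ∀ j k, B j k = (v j)⁻¹ * A j k * v k := by
    intro j k
    rw [hB, hSinv, hS, Matrix.mul_diagonal, Matrix.diagonal_mul]
  have hBdiag : ∀ i, B i i = A i i := by
    intro i
    rw [hBent, mul_comm ((v i)⁻¹) (A i i), mul_assoc, inv_mul_cancel₀ (hv i), mul_one]
  have hrow : ∀ j, ∑ i, B j i = lam1 := by
    intro j
    have hAvj : ∑ i, A j i * v i = lam1 * v j := by
      have := congrFun hAv j
      simpa [Matrix.mulVec, dotProduct] using this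
    calc ∑ i, B j i = (v j)⁻¹ * ∑ i, A j i * v i := by
          rw [Finset.mul_sum]
          exact Finset.sum_congr rfl fun i _ => by rw [hBent]; ring
      _ = lam1 := by rw [hAvj, mul_comm lam1 (v j), ← mul_assoc, inv_mul_cancel₀ (hv j), one_mul]
  -- eigenvector of the transpose
  have hmuT : ((A.map ((↑) : ℝ → ℂ))ᵀ).charpoly.IsRoot mu := by
    rw [charpoly_transpose']
    exact hmu
  obtain ⟨x, hx0, hx⟩ := exists_eigvec _ mu hmuT
  have hxA : ∀ i, ∑ j, (A j i : ℂ) * x j = mu * x i := by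
    intro i
    have h := congrFun hx i
    simpa [Matrix.mulVec, dotProduct, Matrix.transpose_apply, Matrix.map_apply,
      mul_comm] using h
  set w : Fin n → ℂ := fun j => (v j : ℂ) * x j with hwdef
  have hBw : ∀ i, ∑ j, (B j i : ℂ) * w j = mu * w i := by
    intro i
    have hterm : ∀ j, (B j i : ℂ) * w j = (v i : ℂ) * ((A j i : ℂ) * x j) := by
      intro j
      have hvj : (v j : ℂ) ≠ 0 := by exact_mod_cast hv j
      rw [hBent]
      push_cast
      field_simp
      ring
    rw [Finset.sum_congr rfl fun j _ => hterm j, ← Finset.mul_sum, hxA]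
    show (v i : ℂ) * (mu * x i) = mu * ((v i : ℂ) * x i)
    ring
  -- the sum of the eigenvector components vanishes
  have hsumw : ∑ j, w j = 0 := by
    have h1 : mu * ∑ j, w j = (lam1 : ℂ) * ∑ j, w j := by
      calc mu * ∑ j, w j = ∑ i, mu * w i := by rw [Finset.mul_sum]
        _ = ∑ i, ∑ j, (B j i : ℂ) * w j := by
            exact Finset.sum_congr rfl fun i _ => (hBw i).symm
        _ = ∑ j, (∑ i, (B j i : ℂ)) * w j := by
            rw [Finset.sum_comm]
            exact Finset.sum_congr rfl fun j _ => (Finset.sum_mul ..).symm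
        _ = ∑ j, (lam1 : ℂ) * w j := by
            refine Finset.sum_congr rfl fun j _ => ?_
            congr 1
            have := hrow j
            push_cast [← this]
            rfl
        _ = (lam1 : ℂ) * ∑ j, w j := by rw [Finset.mul_sum]
    have h2 : (mu - (lam1 : ℂ)) * ∑ j, w j = 0 := by rw [sub_mul, h1, sub_self]
    rcases mul_eq_zero.mp h2 with h | h
    · exact absurd (sub_eq_zero.mp h) hne
    · exact h
  -- maximal component
  obtain ⟨j0, hj0⟩ := Function.ne_iff.mp hx0
  have hwj0 : w j0 ≠ 0 := mul_ne_zero (by exact_mod_cast hv j0) hj0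
  obtain ⟨i, -, hmax⟩ := Finset.exists_max_image Finset.univ (fun i => ‖w i‖)
    ⟨j0, Finset.mem_univ j0⟩
  have hwi : 0 < ‖w i‖ :=
    lt_of_lt_of_le (norm_pos_iff.mpr hwj0) (hmax j0 (Finset.mem_univ j0))
  -- second-type Gershgorin argument
  set y : Fin n → ℝ := fun j => if j = i then 0 else B j i with hydef
  set l : List ℝ := List.ofFn y with hldef
  have hlen : l.length = n := by rw [hldef, List.length_ofFn]
  obtain ⟨c, hc⟩ := median_bound n (by omega) l hlen
  have hrad : halfSumDiff n (sortDesc l) = secondTypeRadius Bᵀ i := by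
    rw [secondTypeRadius, hldef]
    rfl
  have hkey : (mu - (A i i : ℂ)) * w i = ∑ j, ((y j : ℂ) - (c : ℂ)) * w j := by
    have hsplit : ∑ j, ((y j : ℂ) - (c : ℂ)) * w j
        = (∑ j, (y j : ℂ) * w j) - (c : ℂ) * ∑ j, w j := by
      rw [Finset.mul_sum, ← Finset.sum_sub_distrib]
      exact Finset.sum_congr rfl fun j _ => by ring
    rw [hsplit, hsumw, mul_zero, sub_zero]
    have hdiff : ∀ j, (B j i : ℂ) * w j - (y j : ℂ) * w j
        = if j = i then (B i i : ℂ) * w i else 0 := by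
      intro j
      by_cases hj : j = i
      · subst hj; simp [hydef]
      · simp [hydef, hj]
    have h2 : ∑ j, ((B j i : ℂ) * w j - (y j : ℂ) * w j) = (B i i : ℂ) * w i := by
      rw [Finset.sum_congr rfl fun j _ => hdiff j]
      simp
    have h3 : ∑ j, (y j : ℂ) * w j = (∑ j, (B j i : ℂ) * w j) - (B i i : ℂ) * w i := by
      rw [← h2, Finset.sum_sub_distrib]
      ring
    rw [h3, hBw i, hBdiag i]
    ring
  have hsum_eq : ∑ j, |y j - c| = (l.map fun t => |t - c|).sum := by
    rw [hldef, List.map_ofFn, List.sum_ofFn]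
    rfl
  have habs : ‖mu - (A i i : ℂ)‖ * ‖w i‖
      ≤ (∑ j, |y j - c|) * ‖w i‖ := by
    rw [← norm_mul, hkey]
    calc ‖∑ j, ((y j : ℂ) - (c : ℂ)) * w j‖
        ≤ ∑ j, ‖((y j : ℂ) - (c : ℂ)) * w j‖ :=
          norm_sum_le _ _
      _ = ∑ j, |y j - c| * ‖w j‖ := by
          refine Finset.sum_congr rfl fun j _ => ?_
          rw [norm_mul]
          congr 1
          rw [show ((y j : ℂ) - (c : ℂ)) = ((y j - c : ℝ) : ℂ) by push_cast; ring,
            Complex.norm_real, Real.norm_eq_abs]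
      _ ≤ ∑ j, |y j - c| * ‖w i‖ := by
          refine Finset.sum_le_sum fun j _ => ?_
          exact mul_le_mul_of_nonneg_left (hmax j (Finset.mem_univ j)) (abs_nonneg _)
      _ = (∑ j, |y j - c|) * ‖w i‖ := by rw [Finset.sum_mul]
  have hbound : ‖mu - (A i i : ℂ)‖ ≤ secondTypeRadius Bᵀ i := by
    have h1 : ‖mu - (A i i : ℂ)‖ ≤ ∑ j, |y j - c| :=
      le_of_mul_le_mul_right habs hwi
    calc ‖mu - (A i i : ℂ)‖ ≤ ∑ j, |y j - c| := h1
      _ = (l.map fun t => |t - c|).sum := hsum_eq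
      _ ≤ halfSumDiff n (sortDesc l) := hc
      _ = secondTypeRadius Bᵀ i := hrad
  have hfinal : ‖mu‖ ≤ |A i i| + secondTypeRadius Bᵀ i := by
    calc ‖mu‖ = ‖(mu - (A i i : ℂ)) + (A i i : ℂ)‖ := by ring_nf
      _ ≤ ‖mu - (A i i : ℂ)‖ + ‖((A i i : ℝ) : ℂ)‖ :=
          norm_add_le _ _
      _ = ‖mu - (A i i : ℂ)‖ + |A i i| := by rw [Complex.norm_real, Real.norm_eq_abs]
      _ ≤ |A i i| + secondTypeRadius Bᵀ i := by linarith [hbound]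
  exact le_trans hfinal (Finset.le_sup' (fun i => |A i i| + secondTypeRadius Bᵀ i) (Finset.mem_univ i))
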